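/- Let f: R → S be an integral homomorphism of commutative rings. Then the induced map ψ: Spm S → Spm R sending a maximal ideal m of S to f⁻¹(m) (which is a maximal ideal of R since f is integral) is a closed map with respect to the Zariski topologies: the image under ψ of any closed subset of Spm S is closed in Spm R. -/

import Mathlib

theorem maximalSpectrum_comap_isClosedMap_of_isIntegral
    {R S : Type*} [CommRing R] [CommRing S] (f : R →+* S)
    (hf : f.IsIntegral)
    (ψ : MaximalSpectrum S → MaximalSpectrum R)
    (hψ : ∀ m : MaximalSpectrum S, (ψ m).asIdeal = m.asIdeal.comap f) :
    IsClosedMap ψ := by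
  intro C hC
  obtain ⟨Z, hZ, rfl⟩ := isClosed_induced_iff.mp hC
  rw [isClosed_induced_iff]
  refine ⟨PrimeSpectrum.comap f '' Z,
    PrimeSpectrum.isClosedMap_comap_of_isIntegral f hf Z hZ, ?_⟩
  ext n
  constructor
  · rintro ⟨p, hpZ, hpn⟩
    -- p prime in S, comap f p = toPrimeSpectrum n
    -- find maximal m ⊇ p.asIdeal
    obtain ⟨m, hm, hpm⟩ := p.asIdeal.exists_le_maximal p.isPrime.ne_top
    refine ⟨⟨m, hm⟩, ?_, ?_⟩
    · show (⟨m, hm⟩ : MaximalSpectrum S).toPrimeSpectrum ∈ Z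
      exact hZ.stableUnderSpecialization
        ((PrimeSpectrum.le_iff_specializes p ⟨m, hm.isPrime⟩).mp hpm) hpZ
    · -- ψ ⟨m, hm⟩ = n
      have h1 : n.asIdeal ≤ m.comap f := by
        have := congrArg PrimeSpectrum.asIdeal hpn
        simp only [PrimeSpectrum.comap_asIdeal] at this
        have h0 : Ideal.comap f p.asIdeal = n.asIdeal := this
        rw [← h0]
        exact Ideal.comap_mono hpm
      have h2 : (m.comap f) ≠ ⊤ := Ideal.comap_ne_top f hm.ne_top
      have : (ψ ⟨m, hm⟩).asIdeal = n.asIdeal := by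
        rw [hψ]
        exact (n.isMaximal.eq_of_le h2 h1).symm
      exact MaximalSpectrum.ext this
  · rintro ⟨m, hmC, rfl⟩
    exact ⟨m.toPrimeSpectrum, hmC, PrimeSpectrum.ext (hψ m).symm⟩
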